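/- For every real p ≥ 1, with m = ⌊p⌋, and every natural number n ≤ m, the ratio of Poisson probabilities satisfies h_n(p) / h_m(p) ≤ e · exp(-(p - n)² / (2p)); equivalently, log(h_n(p) / h_m(p)) ≤ -(p - n)² / (2p) + 1. -/

import Mathlib

open Finset

lemma prod_Ioc_cast_div (p : ℝ) (hp : 0 < p) (n : ℕ) :
    ∀ m, n ≤ m →
      ∏ k ∈ Finset.Ioc n m, ((k : ℝ) / p) =
        ((Nat.factorial m : ℝ) / Nat.factorial n) * (p ^ n / p ^ m) := by
  intro m
  induction m with
  | zero =>
    intro h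
    interval_cases n
    simp
  | succ m ih =>
    intro h
    rcases Nat.lt_or_ge n (m + 1) with h' | h'
    · have hnm : n ≤ m := Nat.lt_succ_iff.mp h'
      rw [Finset.prod_Ioc_succ_top hnm, ih hnm]
      have hf : (Nat.factorial m : ℝ) ≠ 0 := by positivity
      have hfn : (Nat.factorial n : ℝ) ≠ 0 := by positivity
      have hpn : p ^ n ≠ 0 := by positivity
      rw [Nat.factorial_succ]
      push_cast
      field_simp
      ring
    · have hn : n = m + 1 := le_antisymm h h'
      subst hn
      have hf : (Nat.factorial (m + 1) : ℝ) ≠ 0 := by positivity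
      have hpn : p ^ (m + 1) ≠ 0 := by positivity
      simp [div_self hf, div_self hpn]

lemma sum_Ioc_cast (n : ℕ) :
    ∀ m, n ≤ m →
      (∑ k ∈ Finset.Ioc n m, (k : ℝ)) * 2 =
        (m : ℝ) * (m + 1) - (n : ℝ) * (n + 1) := by
  intro m
  induction m with
  | zero =>
    intro h
    interval_cases n
    simp
  | succ m ih =>
    intro h
    rcases Nat.lt_or_ge n (m + 1) with h' | h'
    · have hnm : n ≤ m := Nat.lt_succ_iff.mp h'
      rw [Finset.sum_Ioc_succ_top hnm]
      have := ih hnm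
      push_cast
      push_cast at this
      nlinarith [this]
    · have hn : n = m + 1 := le_antisymm h h'
      subst hn
      simp

theorem poisson_ratio_bound (p : ℝ) (hp : 1 ≤ p) (n : ℕ) (hn : n ≤ ⌊p⌋₊) :
    (Real.exp (-p) * p ^ n / (Nat.factorial n : ℝ)) /
        (Real.exp (-p) * p ^ (⌊p⌋₊) / (Nat.factorial ⌊p⌋₊ : ℝ)) ≤
      Real.exp 1 * Real.exp (-(p - (n : ℝ)) ^ 2 / (2 * p)) := by
  set m := ⌊p⌋₊ with hm
  have hp0 : (0 : ℝ) < p := by linarith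
  have hmp : (m : ℝ) ≤ p := Nat.floor_le hp0.le
  have hpm : p < (m : ℝ) + 1 := Nat.lt_floor_add_one p
  have hnm : (n : ℝ) ≤ (m : ℝ) := by exact_mod_cast hn
  have hn0 : (0 : ℝ) ≤ (n : ℝ) := Nat.cast_nonneg n
  -- Step 1: rewrite the ratio as a product
  have hfn : (Nat.factorial n : ℝ) ≠ 0 := by positivity
  have hfm : (Nat.factorial m : ℝ) ≠ 0 := by positivity
  have hE : Real.exp (-p) ≠ 0 := Real.exp_ne_zero _
  have hpn : p ^ n ≠ 0 := by positivity
  have hpmne : p ^ m ≠ 0 := by positivity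
  have h1 : (Real.exp (-p) * p ^ n / (Nat.factorial n : ℝ)) /
        (Real.exp (-p) * p ^ m / (Nat.factorial m : ℝ)) =
      ∏ k ∈ Finset.Ioc n m, ((k : ℝ) / p) := by
    rw [prod_Ioc_cast_div p hp0 n m hn]
    field_simp
  rw [h1]
  -- Step 2: bound the product by exp of a sum
  have h2 : ∏ k ∈ Finset.Ioc n m, ((k : ℝ) / p) ≤
      Real.exp (∑ k ∈ Finset.Ioc n m, ((k : ℝ) / p - 1)) := by
    rw [Real.exp_sum]
    apply Finset.prod_le_prod
    · intro k _
      positivity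
    · intro k _
      have := Real.add_one_le_exp ((k : ℝ) / p - 1)
      linarith
  refine h2.trans ?_
  -- Step 3: bound the sum
  have hsum : (∑ k ∈ Finset.Ioc n m, (k : ℝ)) * 2 =
      (m : ℝ) * (m + 1) - (n : ℝ) * (n + 1) := sum_Ioc_cast n m hn
  have hcard : ((Finset.Ioc n m).card : ℝ) = (m : ℝ) - (n : ℝ) := by
    rw [Nat.card_Ioc]
    push_cast [Nat.cast_sub hn]
    ring
  have h3 : ∑ k ∈ Finset.Ioc n m, ((k : ℝ) / p - 1) ≤
      1 - (p - (n : ℝ)) ^ 2 / (2 * p) := by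
    rw [Finset.sum_sub_distrib, Finset.sum_const, nsmul_eq_mul, hcard,
      ← Finset.sum_div]
    rw [div_sub' hp0.ne', sub_div' (by positivity : (2 : ℝ) * p ≠ 0)]
    rw [div_le_div_iff₀ hp0 (by positivity)]
    nlinarith [mul_nonneg (sub_nonneg.mpr hmp) (by linarith : (0 : ℝ) ≤ 2 - (p - (m : ℝ))),
      mul_pos hp0 hp0, sq_nonneg (p - (n : ℝ))]
  calc Real.exp (∑ k ∈ Finset.Ioc n m, ((k : ℝ) / p - 1))
      ≤ Real.exp (1 - (p - (n : ℝ)) ^ 2 / (2 * p)) := Real.exp_le_exp.mpr h3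
    _ = Real.exp 1 * Real.exp (-(p - (n : ℝ)) ^ 2 / (2 * p)) := by
        rw [← Real.exp_add]
        congr 1
        ring
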